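/- arXiv:2602.03546 — 2 statements merged into one kernel-verified Lean document; each statement's English description precedes it below -/
import Mathlib

section
/- For any vector s ∈ ℝ^E, the output v = -Ω s satisfies ‖v‖₂ ≤ ‖s‖₂ · √(R_max / R_min), where R_max and R_min are the largest and smallest diagonal entries of R. -/
open Matrix

private lemma mulVec_dot {E F : ℕ} (N : Matrix (Fin E) (Fin F) ℝ) (s : Fin F → ℝ)
    (w : Fin E → ℝ) : (N *ᵥ s) ⬝ᵥ w = s ⬝ᵥ (Nᵀ *ᵥ w) := by
  rw [Matrix.dotProduct_mulVec, Matrix.vecMul_transpose, dotProduct_comm]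

theorem omega_output_norm_bound
    (C E : ℕ) (A : Matrix (Fin C) (Fin E) ℝ) (R : Matrix (Fin E) (Fin E) ℝ)
    (hA : A.rank = C) (hRdiag : R.IsDiag) (hRpd : R.PosDef)
    (hinv : IsUnit (A * R * Aᵀ))
    (Rmax Rmin : ℝ)
    (hmax : IsGreatest (Set.range fun e => R e e) Rmax)
    (hmin : IsLeast (Set.range fun e => R e e) Rmin)
    (s : Fin E → ℝ) :
    Real.sqrt (∑ e, (-((R * Aᵀ * (A * R * Aᵀ)⁻¹ * A) *ᵥ s)) e ^ 2)
      ≤ Real.sqrt (∑ e, s e ^ 2) * Real.sqrt (Rmax / Rmin) := by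
  set r : Fin E → ℝ := fun e => R e e with hr_def
  have hRdg : Matrix.diagonal r = R := hRdiag.diagonal_diag
  have hr : ∀ e, 0 < r e := by
    rw [← hRdg] at hRpd
    exact Matrix.posDef_diagonal_iff.mp hRpd
  -- R min/max facts
  obtain ⟨e0, he0⟩ := hmin.1
  have hRminpos : 0 < Rmin := he0 ▸ hr e0
  have hRmaxpos : 0 < Rmax := lt_of_lt_of_le hRminpos (hmin.2 (hmax.1))
  have hle_max : ∀ e, r e ≤ Rmax := fun e => hmax.2 ⟨e, rfl⟩
  have hle_min : ∀ e, Rmin ≤ r e := fun e => hmin.2 ⟨e, rfl⟩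
  -- inverse of R
  set D : Matrix (Fin E) (Fin E) ℝ := Matrix.diagonal (fun e => (r e)⁻¹) with hD_def
  have hDR : D * R = 1 := by
    rw [← hRdg, hD_def, Matrix.diagonal_mul_diagonal]
    rw [show (fun e => (r e)⁻¹ * r e) = fun _ => (1:ℝ) from
      funext fun e => inv_mul_cancel₀ (hr e).ne', Matrix.diagonal_one]
  have hRD : R * D = 1 := by
    rw [← hRdg, hD_def, Matrix.diagonal_mul_diagonal]
    rw [show (fun e => r e * (r e)⁻¹) = fun _ => (1:ℝ) from
      funext fun e => mul_inv_cancel₀ (hr e).ne', Matrix.diagonal_one]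
  have hRsym : Rᵀ = R := by rw [← hRdg, Matrix.diagonal_transpose]
  -- the inverse matrix
  set B : Matrix (Fin C) (Fin C) ℝ := (A * R * Aᵀ)⁻¹ with hB_def
  have hdet : IsUnit (A * R * Aᵀ).det := (Matrix.isUnit_iff_isUnit_det _).mp hinv
  have hBI : B * (A * R * Aᵀ) = 1 := Matrix.nonsing_inv_mul _ hdet
  have hBsym : Bᵀ = B := by
    rw [hB_def, Matrix.transpose_nonsing_inv]
    congr 1
    rw [Matrix.transpose_mul, Matrix.transpose_mul, Matrix.transpose_transpose, hRsym,
      Matrix.mul_assoc]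
  set M : Matrix (Fin E) (Fin E) ℝ := Aᵀ * B * A with hM_def
  have hMsym : Mᵀ = M := by
    rw [hM_def, Matrix.transpose_mul, Matrix.transpose_mul, Matrix.transpose_transpose,
      hBsym, Matrix.mul_assoc]
  have hMRM : M * (R * M) = M := by
    have h2 : (A * R * Aᵀ) * (B * A) = A := by
      rw [← Matrix.mul_assoc, Matrix.mul_nonsing_inv _ hdet, Matrix.one_mul]
    rw [hM_def]
    calc Aᵀ * B * A * (R * (Aᵀ * B * A)) = Aᵀ * B * ((A * R * Aᵀ) * (B * A)) := by
          simp only [Matrix.mul_assoc]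
      _ = Aᵀ * B * A := by rw [h2]
  -- the vector v
  set v : Fin E → ℝ := (R * Aᵀ * (A * R * Aᵀ)⁻¹ * A) *ᵥ s with hv_def
  have hv : v = (R * M) *ᵥ s := by
    rw [hv_def, hM_def, hB_def]; congr 1; simp [Matrix.mul_assoc]
  -- key scalar identities
  have keyA : v ⬝ᵥ (D *ᵥ v) = s ⬝ᵥ (M *ᵥ s) := by
    rw [hv, Matrix.mulVec_mulVec, mulVec_dot, Matrix.mulVec_mulVec,
      Matrix.transpose_mul, hMsym, hRsym]
    rw [show M * R * (D * (R * M)) = M * (R * M) by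
      rw [← Matrix.mul_assoc (M * R) D, Matrix.mul_assoc M R D, hRD, Matrix.mul_one], hMRM]
  have keyB : v ⬝ᵥ (D *ᵥ s) = s ⬝ᵥ (M *ᵥ s) := by
    rw [hv, mulVec_dot, Matrix.mulVec_mulVec, Matrix.transpose_mul, hMsym, hRsym,
      Matrix.mul_assoc, hRD, Matrix.mul_one]
  have keyC : s ⬝ᵥ (D *ᵥ v) = s ⬝ᵥ (M *ᵥ s) := by
    rw [hv, Matrix.mulVec_mulVec, ← Matrix.mul_assoc, hDR, Matrix.one_mul]
  -- positivity of the D-quadratic form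
  have hDpd : D.PosDef := Matrix.PosDef.diagonal (fun e => inv_pos.mpr (hr e))
  have hquad : (0:ℝ) ≤ (s - v) ⬝ᵥ (D *ᵥ (s - v)) := by
    have := hDpd.posSemidef.dotProduct_mulVec_nonneg (s - v)
    simpa using this
  have hexp : (s - v) ⬝ᵥ (D *ᵥ (s - v)) = s ⬝ᵥ (D *ᵥ s) - s ⬝ᵥ (M *ᵥ s) := by
    rw [Matrix.mulVec_sub, dotProduct_sub, sub_dotProduct,
      sub_dotProduct, keyA, keyB, keyC]
    ring
  have hMle : s ⬝ᵥ (M *ᵥ s) ≤ s ⬝ᵥ (D *ᵥ s) := by linarith [hexp ▸ hquad]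
  -- entrywise bounds
  have hvv : ∑ e, v e ^ 2 ≤ Rmax * (v ⬝ᵥ (D *ᵥ v)) := by
    rw [dotProduct, Finset.mul_sum]
    apply Finset.sum_le_sum
    intro e _
    have hm : v e * Matrix.mulVec D v e = (r e)⁻¹ * v e ^ 2 := by
      rw [hD_def, Matrix.mulVec_diagonal]; ring
    rw [hm]
    have h1 : r e * ((r e)⁻¹ * v e ^ 2) = v e ^ 2 := by
      rw [← mul_assoc, mul_inv_cancel₀ (hr e).ne', one_mul]
    conv_lhs => rw [← h1]
    exact mul_le_mul_of_nonneg_right (hle_max e)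
      (mul_nonneg (inv_nonneg.mpr (hr e).le) (sq_nonneg _))
  have hss : s ⬝ᵥ (D *ᵥ s) ≤ Rmin⁻¹ * ∑ e, s e ^ 2 := by
    rw [dotProduct, Finset.mul_sum]
    apply Finset.sum_le_sum
    intro e _
    have hm : s e * Matrix.mulVec D s e = (r e)⁻¹ * s e ^ 2 := by
      rw [hD_def, Matrix.mulVec_diagonal]; ring
    rw [hm]
    exact mul_le_mul_of_nonneg_right
      (inv_anti₀ hRminpos (hle_min e)) (sq_nonneg _)
  -- combine
  have hmain : ∑ e, v e ^ 2 ≤ (∑ e, s e ^ 2) * (Rmax / Rmin) := by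
    calc ∑ e, v e ^ 2 ≤ Rmax * (v ⬝ᵥ (D *ᵥ v)) := hvv
      _ = Rmax * (s ⬝ᵥ (M *ᵥ s)) := by rw [keyA]
      _ ≤ Rmax * (s ⬝ᵥ (D *ᵥ s)) := by
          exact mul_le_mul_of_nonneg_left hMle hRmaxpos.le
      _ ≤ Rmax * (Rmin⁻¹ * ∑ e, s e ^ 2) := by
          exact mul_le_mul_of_nonneg_left hss hRmaxpos.le
      _ = (∑ e, s e ^ 2) * (Rmax / Rmin) := by ring
  have hneg : ∑ e, (-v) e ^ 2 = ∑ e, v e ^ 2 := by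
    apply Finset.sum_congr rfl; intro e _; simp
  calc Real.sqrt (∑ e, (-v) e ^ 2) = Real.sqrt (∑ e, v e ^ 2) := by rw [hneg]
    _ ≤ Real.sqrt ((∑ e, s e ^ 2) * (Rmax / Rmin)) := Real.sqrt_le_sqrt hmain
    _ = Real.sqrt (∑ e, s e ^ 2) * Real.sqrt (Rmax / Rmin) :=
        Real.sqrt_mul (Finset.sum_nonneg fun e _ => sq_nonneg _) _
end

section
/- The Jacobian of the map r ↦ v(r) := -Ω_{A/R} s with respect to the resistance vector r equals (I - Ω_{A/R}) diag(i), where i = -R⁻¹ Ω_{A/R} s; that is, ∂v_a/∂r_b = ((I - Ω_{A/R}) diag(i))_{ab}. -/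
open Matrix

noncomputable def OmMat {C E : ℕ} (A : Matrix (Fin C) (Fin E) ℝ) (r : Fin E → ℝ) :
    Matrix (Fin E) (Fin E) ℝ :=
  Matrix.diagonal r * Aᵀ * (A * Matrix.diagonal r * Aᵀ)⁻¹ * A

noncomputable def vMap {C E : ℕ} (A : Matrix (Fin C) (Fin E) ℝ) (r : Fin E → ℝ)
    (s : Fin E → ℝ) : Fin E → ℝ :=
  -(OmMat A r *ᵥ s)

noncomputable def iMap {C E : ℕ} (A : Matrix (Fin C) (Fin E) ℝ) (r : Fin E → ℝ)
    (s : Fin E → ℝ) : Fin E → ℝ :=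
  (Matrix.diagonal r)⁻¹ *ᵥ vMap A r s

lemma isUnit_of_rank_eq_card {n : ℕ} (M : Matrix (Fin n) (Fin n) ℝ) (h : M.rank = n) :
    IsUnit M := by
  rw [← Matrix.mulVec_surjective_iff_isUnit]
  have hr : LinearMap.range M.mulVecLin = ⊤ := by
    apply Submodule.eq_top_of_finrank_eq
    simpa [Matrix.rank] using h
  exact LinearMap.range_eq_top.mp hr

lemma aux_isUnit {C E : ℕ} (A : Matrix (Fin C) (Fin E) ℝ) (r : Fin E → ℝ)
    (hA : A.rank = C) (hr : ∀ e, 0 < r e) :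
    IsUnit (A * Matrix.diagonal r * Aᵀ) := by
  set D : Matrix (Fin E) (Fin E) ℝ := Matrix.diagonal fun e => Real.sqrt (r e) with hD
  have hDet : IsUnit D.det := by
    rw [hD, Matrix.det_diagonal]
    exact (Finset.prod_pos fun e _ => Real.sqrt_pos.mpr (hr e)).ne'.isUnit
  have key : A * Matrix.diagonal r * Aᵀ = (A * D) * (A * D)ᵀ := by
    have hdd : D * D = Matrix.diagonal r := by
      rw [hD, Matrix.diagonal_mul_diagonal]
      exact congrArg Matrix.diagonal (funext fun e => Real.mul_self_sqrt (hr e).le)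
    rw [Matrix.transpose_mul, Matrix.diagonal_transpose, hD, ← hD,
      show A * D * (D * Aᵀ) = A * (D * D) * Aᵀ by simp only [Matrix.mul_assoc], hdd]
  rw [key]
  apply isUnit_of_rank_eq_card
  rw [Matrix.rank_self_mul_transpose, Matrix.rank_mul_eq_left_of_isUnit_det _ _ hDet, hA]

section
attribute [local instance] Matrix.linftyOpNormedAddCommGroup Matrix.linftyOpNormedSpace
  Matrix.linftyOpNormedRing Matrix.linftyOpNormedAlgebra

lemma hasDerivAt_inv_entry {C : ℕ} (M0 K : Matrix (Fin C) (Fin C) ℝ) (t : ℝ)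
    (hM : IsUnit M0) (c d : Fin C) :
    HasDerivAt (fun u : ℝ => (M0 + (u - t) • K)⁻¹ c d)
      ((-(M0⁻¹ * K * M0⁻¹)) c d) t := by
  have hMfun : HasDerivAt (fun u : ℝ => M0 + (u - t) • K) K t := by
    have h1 : HasDerivAt (fun u : ℝ => u - t) 1 t := (hasDerivAt_id t).sub_const t
    have h2 := (h1.smul_const K).const_add M0
    simp only [one_smul] at h2
    exact h2
  have hu : (hM.unit : Matrix (Fin C) (Fin C) ℝ) = M0 := rfl
  have hinv := hasFDerivAt_ringInverse (𝕜 := ℝ) hM.unit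
  rw [hu] at hinv
  have hpt : M0 + ((t : ℝ) - t) • K = M0 := by simp
  have hinv2 : HasFDerivAt Ring.inverse
      (-((ContinuousLinearMap.mulLeftRight ℝ (Matrix (Fin C) (Fin C) ℝ)) ↑hM.unit⁻¹) ↑hM.unit⁻¹)
      (M0 + ((t : ℝ) - t) • K) := by rw [hpt]; exact hinv
  have hN : HasDerivAt (fun u : ℝ => Ring.inverse (M0 + (u - t) • K))
      (-(M0⁻¹ * K * M0⁻¹)) t := by
    have := hinv2.comp_hasDerivAt t hMfun
    simp [Function.comp_def, Matrix.coe_units_inv, hM.unit_spec,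
      ← Matrix.nonsing_inv_eq_ringInverse] at this ⊢
    exact this
  have hN' : HasDerivAt (fun u : ℝ => (M0 + (u - t) • K)⁻¹)
      (-(M0⁻¹ * K * M0⁻¹)) t := by
    simpa only [Matrix.nonsing_inv_eq_ringInverse] using hN
  have hL := (LinearMap.toContinuousLinearMap (Matrix.entryLinearMap ℝ ℝ c d)).hasFDerivAt
    (x := (M0 + ((t : ℝ) - t) • K)⁻¹)
  have h3 := hL.comp_hasDerivAt t hN'
  simp [Function.comp_def] at h3
  exact h3
end

theorem jacobian_of_voltage_map
    (C E : ℕ) (A : Matrix (Fin C) (Fin E) ℝ) (r : Fin E → ℝ) (s : Fin E → ℝ)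
    (hA : A.rank = C) (hr : ∀ e, 0 < r e) :
    ∀ a b : Fin E,
      HasDerivAt (fun t : ℝ => vMap A (Function.update r b t) s a)
        (((1 - OmMat A r) * Matrix.diagonal (iMap A r s)) a b) (r b) := by
  intro a b
  classical
  set M0 : Matrix (Fin C) (Fin C) ℝ := A * Matrix.diagonal r * Aᵀ with hM0def
  have hM0 : IsUnit M0 := aux_isUnit A r hA hr
  set K : Matrix (Fin C) (Fin C) ℝ := A * Matrix.single b b (1:ℝ) * Aᵀ with hKdef
  set N0 : Matrix (Fin C) (Fin C) ℝ := M0⁻¹ with hN0def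
  set w : Fin C → ℝ := A *ᵥ s with hwdef
  -- affine path
  have haff : ∀ u : ℝ, A * Matrix.diagonal (Function.update r b u) * Aᵀ = M0 + (u - r b) • K := by
    intro u
    have hdiag : Matrix.diagonal (Function.update r b u)
        = Matrix.diagonal r + (u - r b) • Matrix.single b b (1 : ℝ) := by
      ext i j
      rcases eq_or_ne i j with rfl | hij
      · rcases eq_or_ne i b with rfl | hib
        · simp only [Matrix.diagonal_apply_eq, Function.update_self, Matrix.add_apply,
            Matrix.smul_apply, Matrix.single_apply_same, smul_eq_mul]
          ring
        · have hbi : ¬(b = i ∧ b = i) := fun h => hib h.1.symm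
          simp [Function.update_apply, hib, Ne.symm hib, Matrix.single, hbi]
      · have hbij : ¬(b = i ∧ b = j) := fun h => hij (h.1 ▸ h.2 ▸ rfl)
        simp [Matrix.diagonal_apply_ne _ hij, Matrix.single, hbij]
    rw [hdiag, Matrix.mul_add, Matrix.add_mul, Matrix.mul_smul, Matrix.smul_mul]
    try rfl
  -- entrywise formula for vMap
  have hform : ∀ (r' : Fin E → ℝ) (x : Fin E),
      vMap A r' s x
        = -(r' x * ∑ c, A c x * ((A * Matrix.diagonal r' * Aᵀ)⁻¹ *ᵥ (A *ᵥ s)) c) := by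
    intro r' x
    simp only [vMap, OmMat, Pi.neg_apply, neg_inj]
    rw [← Matrix.mulVec_mulVec, ← Matrix.mulVec_mulVec, ← Matrix.mulVec_mulVec,
      Matrix.mulVec_diagonal]
    congr 1
    try simp [Matrix.mulVec, dotProduct, Matrix.transpose_apply]
  -- derivative of the diagonal entry
  have hρ : HasDerivAt (fun u : ℝ => Function.update r b u a)
      (if a = b then (1 : ℝ) else 0) (r b) := by
    rcases eq_or_ne a b with rfl | hab
    · simpa [Function.update_apply] using hasDerivAt_id' _
    · simpa [Function.update_apply, hab] using hasDerivAt_const (r b) (r a)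
  -- derivative of the sum part
  have hg : HasDerivAt (fun u : ℝ => ∑ c, A c a * ((M0 + (u - r b) • K)⁻¹ *ᵥ w) c)
      (∑ c, A c a * ((-(N0 * K * N0)) *ᵥ w) c) (r b) := by
    apply HasDerivAt.fun_sum
    intro c _
    apply HasDerivAt.const_mul
    simp only [Matrix.mulVec, dotProduct]
    apply HasDerivAt.fun_sum
    intro d _
    exact (hasDerivAt_inv_entry M0 K (r b) hM0 c d).mul_const (w d)
  have hcomb := (hρ.mul hg).neg
  have hfun : (fun u : ℝ => vMap A (Function.update r b u) s a)
      = fun u : ℝ =>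
          -((Function.update r b u a) * ∑ c, A c a * ((M0 + (u - r b) • K)⁻¹ *ᵥ w) c) := by
    funext u
    rw [hform, haff]
  rw [hfun]
  refine hcomb.congr_deriv (Eq.symm ?_)
  -- now the value identity
  have hra : Function.update r b (r b) a = r a := by
    rcases eq_or_ne a b with rfl | hab
    · simp
    · simp [Function.update_apply, hab]
  have hpt : M0 + ((r b : ℝ) - r b) • K = M0 := by simp
  rw [hra, hpt]
  -- abbreviations
  set Hb : ℝ := ∑ c, A c b * (N0 *ᵥ w) c with hHbdef
  set Ha : ℝ := ∑ c, A c a * (N0 *ᵥ w) c with hHadef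
  set T : ℝ := ∑ c, A c a * (N0 *ᵥ (fun d => A d b)) c with hTdef
  -- second sum simplification
  have hS1 : (∑ c, A c a * ((-(N0 * K * N0)) *ᵥ w) c) = -(Hb * T) := by
    have h1 : (-(N0 * K * N0)) *ᵥ w = -(N0 *ᵥ (K *ᵥ (N0 *ᵥ w))) := by
      simp [Matrix.neg_mulVec, Matrix.mul_assoc]
    have h2 : K *ᵥ (N0 *ᵥ w) = fun c => A c b * Hb := by
      rw [hKdef, Matrix.mul_assoc, ← Matrix.mulVec_mulVec, ← Matrix.mulVec_mulVec,
        Matrix.single_mulVec]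
      have : Function.update (0 : Fin E → ℝ) b (1 * (Aᵀ *ᵥ (N0 *ᵥ w)) b)
          = Pi.single b Hb := by
        ext e
        rcases eq_or_ne e b with rfl | heb
        · simp [hHbdef, Matrix.mulVec, dotProduct, Matrix.transpose_apply]
        · simp [Function.update_apply, heb, Pi.single_apply]
      rw [this, Matrix.mulVec_single]
      funext c
      simp [Matrix.col_apply]
    rw [h1, h2]
    have h3 : N0 *ᵥ (fun c => A c b * Hb) = Hb • (N0 *ᵥ fun d => A d b) := by
      have : (fun c => A c b * Hb) = Hb • fun d => A d b := by
        funext c; simp [mul_comm]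
      rw [this, Matrix.mulVec_smul]
    rw [h3]
    rw [Finset.mul_sum, ← Finset.sum_neg_distrib]
    refine Finset.sum_congr rfl fun c _ => ?_
    simp only [Pi.neg_apply, Pi.smul_apply, smul_eq_mul]
    ring
  -- OmMat entry
  have hOm : OmMat A r a b = r a * T := by
    rw [OmMat, ← hM0def, ← hN0def]
    rw [show Matrix.diagonal r * Aᵀ * N0 * A = Matrix.diagonal r * (Aᵀ * (N0 * A)) by
      simp only [Matrix.mul_assoc]]
    rw [Matrix.diagonal_mul]
    congr 1
    try simp [Matrix.mul_apply, Matrix.mulVec, dotProduct, Matrix.transpose_apply,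
      Finset.mul_sum]
  -- iMap entry
  have hinvdiag : (Matrix.diagonal r)⁻¹ = Matrix.diagonal fun e => (r e)⁻¹ := by
    apply Matrix.inv_eq_right_inv
    rw [Matrix.diagonal_mul_diagonal]
    rw [show (fun e => r e * (r e)⁻¹) = fun _ => (1 : ℝ) from
      funext fun e => mul_inv_cancel₀ (hr e).ne']
    exact Matrix.diagonal_one
  have hib : iMap A r s b = -Hb := by
    rw [iMap, hinvdiag, Matrix.mulVec_diagonal, hform r b, ← hM0def, ← hN0def, ← hwdef,
      ← hHbdef]
    rw [mul_neg, inv_mul_cancel_left₀ (hr b).ne']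
  -- assemble
  rw [Matrix.mul_diagonal, hib, Matrix.sub_apply, Matrix.one_apply, hOm, hS1]
  rcases eq_or_ne a b with rfl | hab
  · have : Ha = Hb := by rw [hHadef, hHbdef]
    rw [this]
    simp only [if_pos rfl]
    ring
  · simp only [if_neg hab]
    ring
end
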